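/- Let X ⊆ ℝⁿ be nonempty compact convex, F : ℝⁿ → ℝⁿ continuous and monotone, and f : ℝⁿ → ℝ continuously differentiable and μ-strongly convex on X with ‖∇f(x)‖ ≤ C_f on X. For η > 0, let x*_η denote the unique solution of VI(X, F + η∇f). Then for any η₁, η₂ > 0, ‖x*_{η₂} − x*_{η₁}‖ ≤ (C_f/μ)·|1 − η₂/η₁|. -/

import Mathlib

open scoped RealInnerProductSpace

lemma grad_strong_mono {n : ℕ} {X : Set (EuclideanSpace ℝ (Fin n))}
    {f : EuclideanSpace ℝ (Fin n) → ℝ}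
    {f' : EuclideanSpace ℝ (Fin n) → EuclideanSpace ℝ (Fin n)}
    (hgrad : ∀ x, HasGradientAt f (f' x) x) {μ : ℝ} (hsc : StrongConvexOn X μ f)
    {x y : EuclideanSpace ℝ (Fin n)} (hx : x ∈ X) (hy : y ∈ X) :
    μ * ‖y - x‖ ^ 2 ≤ ⟪f' y - f' x, y - x⟫ := by
  have hconv : ConvexOn ℝ X fun z => f z - μ / 2 * ‖z‖ ^ 2 :=
    strongConvexOn_iff_convex.mp hsc
  set γ : ℝ → EuclideanSpace ℝ (Fin n) := fun t => t • (y - x) + x with hγdef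
  have hγline : ⇑(AffineMap.lineMap x y : ℝ →ᵃ[ℝ] EuclideanSpace ℝ (Fin n)) = γ := by
    funext t
    simp [AffineMap.lineMap_apply, hγdef]
  have hψconv : ConvexOn ℝ ((AffineMap.lineMap x y : ℝ →ᵃ[ℝ] EuclideanSpace ℝ (Fin n)) ⁻¹' X)
      ((fun z => f z - μ / 2 * ‖z‖ ^ 2) ∘ (AffineMap.lineMap x y : ℝ →ᵃ[ℝ] EuclideanSpace ℝ (Fin n))) :=
    hconv.comp_affineMap _
  rw [hγline] at hψconv
  have hγt : ∀ t : ℝ, HasDerivAt γ (y - x) t := fun t => by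
    have h := ((hasDerivAt_id t).smul_const (y - x)).add_const x
    simp only [id_eq, one_smul] at h
    exact h
  -- derivative of ψ
  have hψ : ∀ t : ℝ, HasDerivAt (fun t => f (γ t) - μ / 2 * ‖γ t‖ ^ 2)
      (⟪f' (γ t), y - x⟫ - μ * ⟪γ t, y - x⟫) t := by
    intro t
    have h1 : HasDerivAt (fun t => f (γ t)) (⟪f' (γ t), y - x⟫) t := by
      have := (hgrad (γ t)).hasFDerivAt.comp_hasDerivAt t (hγt t)
      simp only [InnerProductSpace.toDual_apply_apply] at this
      exact this
    have h2 : HasDerivAt (fun t => ‖γ t‖ ^ 2) (⟪γ t, y - x⟫ + ⟪y - x, γ t⟫) t := by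
      have := (hγt t).inner ℝ (hγt t)
      simp only [real_inner_self_eq_norm_sq] at this
      exact this
    have := h1.sub ((h2.const_mul (μ / 2)))
    refine HasDerivAt.congr_deriv (by exact this) ?_
    rw [real_inner_comm (y - x) (γ t)]
    ring
  have h0 : (0 : ℝ) ∈ γ ⁻¹' X := by simp [hγdef, hx]
  have h1 : (1 : ℝ) ∈ γ ⁻¹' X := by
    simp only [Set.mem_preimage, hγdef, one_smul]
    simpa [sub_add_cancel] using hy
  have hle := hψconv.le_slope_of_hasDerivAt h0 h1 one_pos (hψ 0)
  have hge := hψconv.slope_le_of_hasDerivAt h0 h1 one_pos (hψ 1)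
  have hkey := hle.trans hge
  have hγ0 : γ 0 = x := by simp [hγdef]
  have hγ1 : γ 1 = y := by
    simp only [hγdef, one_smul]
    abel
  rw [hγ0, hγ1] at hkey
  have hin : ⟪f' y - f' x, y - x⟫ = ⟪f' y, y - x⟫ - ⟪f' x, y - x⟫ := inner_sub_left _ _ _
  have hyx : ⟪y, y - x⟫ - ⟪x, y - x⟫ = ‖y - x‖ ^ 2 := by
    rw [← inner_sub_left, real_inner_self_eq_norm_sq]
  rw [hin, ← hyx]
  nlinarith [hkey]

theorem stmt_15 (n : ℕ) (X : Set (EuclideanSpace ℝ (Fin n)))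
    (hXne : X.Nonempty) (hXcpt : IsCompact X) (hXconv : Convex ℝ X)
    (F : EuclideanSpace ℝ (Fin n) → EuclideanSpace ℝ (Fin n)) (hFc : Continuous F)
    (hmono : ∀ u v, 0 ≤ ⟪F u - F v, u - v⟫)
    (f : EuclideanSpace ℝ (Fin n) → ℝ)
    (f' : EuclideanSpace ℝ (Fin n) → EuclideanSpace ℝ (Fin n))
    (hgrad : ∀ x, HasGradientAt f (f' x) x) (hf'c : Continuous f')
    (μ Cf : ℝ) (hμ : 0 < μ) (hsc : StrongConvexOn X μ f)
    (hCf : ∀ x ∈ X, ‖f' x‖ ≤ Cf)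
    (xs : ℝ → EuclideanSpace ℝ (Fin n))
    (hxs : ∀ η > 0, xs η ∈ X ∧ ∀ y ∈ X, 0 ≤ ⟪F (xs η) + η • f' (xs η), y - xs η⟫)
    (η₁ η₂ : ℝ) (hη₁ : 0 < η₁) (hη₂ : 0 < η₂) :
    ‖xs η₂ - xs η₁‖ ≤ Cf / μ * |1 - η₂ / η₁| := by
  obtain ⟨hx1, hvi1⟩ := hxs η₁ hη₁
  obtain ⟨hx2, hvi2⟩ := hxs η₂ hη₂
  set x1 := xs η₁
  set x2 := xs η₂
  set d := x2 - x1 with hd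
  have h1 : 0 ≤ ⟪F x1, d⟫ + η₁ * ⟪f' x1, d⟫ := by
    have := hvi1 x2 hx2
    rwa [inner_add_left, real_inner_smul_left] at this
  have h2 : 0 ≤ -⟪F x2, d⟫ - η₂ * ⟪f' x2, d⟫ := by
    have := hvi2 x1 hx1
    rw [inner_add_left, real_inner_smul_left] at this
    have hneg : x1 - x2 = -d := by rw [hd]; abel
    rw [hneg, inner_neg_right, inner_neg_right] at this
    linarith
  have hm : 0 ≤ ⟪F x2, d⟫ - ⟪F x1, d⟫ := by
    have := hmono x2 x1
    rwa [inner_sub_left] at this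
  have hsm : μ * ‖d‖ ^ 2 ≤ ⟪f' x2, d⟫ - ⟪f' x1, d⟫ := by
    have := grad_strong_mono hgrad hsc hx1 hx2
    rwa [inner_sub_left] at this
  have hcs : |⟪f' x2, d⟫| ≤ Cf * ‖d‖ := by
    calc |⟪f' x2, d⟫| ≤ ‖f' x2‖ * ‖d‖ := abs_real_inner_le_norm _ _
    _ ≤ Cf * ‖d‖ := by
        exact mul_le_mul_of_nonneg_right (hCf x2 hx2) (norm_nonneg _)
  have hCf0 : 0 ≤ Cf := le_trans (norm_nonneg _) (hCf x1 hx1)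
  have hkey : η₁ * (μ * ‖d‖ ^ 2) ≤ (η₁ - η₂) * ⟪f' x2, d⟫ := by
    nlinarith [h1, h2, hm, hsm, hη₁]
  have hkey2 : η₁ * (μ * ‖d‖ ^ 2) ≤ |η₁ - η₂| * (Cf * ‖d‖) := by
    calc η₁ * (μ * ‖d‖ ^ 2) ≤ (η₁ - η₂) * ⟪f' x2, d⟫ := hkey
    _ ≤ |(η₁ - η₂) * ⟪f' x2, d⟫| := le_abs_self _
    _ = |η₁ - η₂| * |⟪f' x2, d⟫| := abs_mul _ _
    _ ≤ |η₁ - η₂| * (Cf * ‖d‖) := mul_le_mul_of_nonneg_left hcs (abs_nonneg _)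
  have habs : |1 - η₂ / η₁| = |η₁ - η₂| / η₁ := by
    have h : 1 - η₂ / η₁ = (η₁ - η₂) / η₁ := by field_simp
    rw [h, abs_div, abs_of_pos hη₁]
  rw [habs]
  rcases eq_or_lt_of_le (norm_nonneg d) with hd0 | hd0
  · rw [← hd0]
    positivity
  · rw [div_mul_div_comm, le_div_iff₀ (by positivity)]
    nlinarith [hkey2, hd0]
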